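/- Lower bound on weighted distance when agreement set is small: With the setup of the weighted univariate multiplicity decoder (T of size n, degree parameter ℓ ≤ d, r = s − ⌊(d−ℓ)/n⌋, weights w(a,i) ≤ (n/2)((s−i) − (d−ℓ)/n)), let g : T → F_{<r}[z] be a received word, R a degree-ℓ polynomial, and A = {(a,i) ∈ T×[r] : g(a) ≡ R(a+z) mod ⟨z⟩^{i+1}}. If |A| ≤ ℓ, then Γ_w^{d,ℓ,s}(g, R) ≥ (n²/2)(s − d/n). -/

import Mathlib

open Polynomial Classical

/-- `agrOrd r p` is the largest `j ∈ [r+1]` with `p ≡ 0 mod z^j`. -/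
noncomputable def agrOrd {F : Type*} [CommRing F] (r : ℕ) (p : Polynomial F) : ℕ :=
  if p = 0 then r else min r (p.rootMultiplicity 0)

/-- The weighted distance `Γ_w^{s,d,ℓ}(g, R)`, with `n = |T|`. -/
noncomputable def Gamma {F : Type*} [Field F] (T : Finset F) (n s d ℓ r : ℕ)
    (g : F → Polynomial F) (w : F → ℕ → ℕ) (R : Polynomial F) : ℚ :=
  ∑ a ∈ T,
    (if agrOrd r (g a - R.comp (X + C a)) < r then
      max ((n : ℚ) * ((s : ℚ) - (agrOrd r (g a - R.comp (X + C a)) : ℚ)) -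
          ((d : ℚ) - (ℓ : ℚ)) - (w a (agrOrd r (g a - R.comp (X + C a))) : ℚ))
        (((Finset.range (agrOrd r (g a - R.comp (X + C a)))).sup (w a) : ℕ) : ℚ)
    else (((Finset.range r).sup (w a) : ℕ) : ℚ))

lemma agr_card {F : Type*} [CommRing F] (r : ℕ) (p : Polynomial F) :
    ((Finset.range r).filter fun i => (X : Polynomial F) ^ (i + 1) ∣ p).card = agrOrd r p := by
  unfold agrOrd
  split_ifs with hp
  · simp [hp]
  · have key : ∀ i, ((X : Polynomial F) ^ (i + 1) ∣ p) ↔ i + 1 ≤ p.rootMultiplicity 0 := by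
      intro i
      rw [Polynomial.le_rootMultiplicity_iff hp]
      simp
    have : ((Finset.range r).filter fun i => (X : Polynomial F) ^ (i + 1) ∣ p)
        = Finset.range (min r (p.rootMultiplicity 0)) := by
      ext i
      simp only [Finset.mem_filter, Finset.mem_range, key, lt_min_iff, Nat.lt_iff_add_one_le]
    rw [this, Finset.card_range]

lemma agr_le {F : Type*} [CommRing F] (r : ℕ) (p : Polynomial F) : agrOrd r p ≤ r := by
  unfold agrOrd; split_ifs <;> simp

/-- If the agreement set `A = {(a,i) ∈ T×[r] : g(a) ≡ R(a+z) mod z^{i+1}}` has size at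
most `ℓ`, then the weighted distance is at least `(n²/2)(s − d/n)`. -/
theorem gamma_lower_bound_small_agreement {F : Type*} [Field F] {n s d ℓ r : ℕ}
    (hn : 0 < n) (hℓd : ℓ ≤ d) (hr : r = s - (d - ℓ) / n)
    (T : Finset F) (hT : T.card = n)
    (g : F → Polynomial F) (hg : ∀ a ∈ T, (g a).degree < (r : WithBot ℕ))
    (R : Polynomial F) (hRdeg : R.natDegree ≤ ℓ)
    (w : F → ℕ → ℕ)
    (hw : ∀ a ∈ T, ∀ i < r, (w a i : ℚ) ≤
      ((n : ℚ) / 2) * (((s : ℚ) - (i : ℚ)) - ((d : ℚ) - (ℓ : ℚ)) / (n : ℚ)))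
    (hA : ((T ×ˢ Finset.range r).filter fun p =>
        (X : Polynomial F) ^ (p.2 + 1) ∣ (g p.1 - R.comp (X + C p.1))).card ≤ ℓ) :
    Gamma T n s d ℓ r g w R ≥ ((n : ℚ) ^ 2 / 2) * ((s : ℚ) - (d : ℚ) / (n : ℚ)) := by
  have hn0 : (n : ℚ) ≠ 0 := Nat.cast_ne_zero.mpr hn.ne'
  have hnQ : (0:ℚ) < n := by exact_mod_cast hn
  -- sum of agreement orders is at most ℓ
  have hsum : ∑ a ∈ T, agrOrd r (g a - R.comp (X + C a)) ≤ ℓ := by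
    have h1 : ((T ×ˢ Finset.range r).filter fun p =>
        (X : Polynomial F) ^ (p.2 + 1) ∣ (g p.1 - R.comp (X + C p.1))).card
        = ∑ a ∈ T, agrOrd r (g a - R.comp (X + C a)) := by
      rw [Finset.card_filter, Finset.sum_product]
      refine Finset.sum_congr rfl fun a _ => ?_
      rw [← Finset.card_filter]
      exact agr_card r (g a - R.comp (X + C a))
    rwa [h1] at hA
  -- when agrOrd = r, the "slack" is nonpositive
  have hrs : r ≤ s := hr ▸ Nat.sub_le _ _
  have hdl : n * (s - r) ≤ d - ℓ := by
    have h1 : s - r ≤ (d - ℓ) / n := by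
      omega
    calc n * (s - r) ≤ n * ((d - ℓ) / n) := Nat.mul_le_mul_left n h1
      _ ≤ d - ℓ := Nat.mul_div_le _ _
  have hdlQ : (n : ℚ) * ((s : ℚ) - (r : ℚ)) - ((d : ℚ) - (ℓ : ℚ)) ≤ 0 := by
    have := hdl
    have h2 : ((n * (s - r) : ℕ) : ℚ) ≤ ((d - ℓ : ℕ) : ℚ) := by exact_mod_cast this
    rw [Nat.cast_mul, Nat.cast_sub hrs, Nat.cast_sub hℓd] at h2
    linarith
  -- termwise lower bound
  have hterm : ∀ a ∈ T,
      ((agrOrd r (g a - R.comp (X + C a)) : ℚ) * (-(n : ℚ) / 2)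
        + ((n : ℚ) * (s : ℚ) - ((d : ℚ) - (ℓ : ℚ))) / 2) ≤
      (if agrOrd r (g a - R.comp (X + C a)) < r then
        max ((n : ℚ) * ((s : ℚ) - (agrOrd r (g a - R.comp (X + C a)) : ℚ)) -
            ((d : ℚ) - (ℓ : ℚ)) - (w a (agrOrd r (g a - R.comp (X + C a))) : ℚ))
          (((Finset.range (agrOrd r (g a - R.comp (X + C a)))).sup (w a) : ℕ) : ℚ)
      else (((Finset.range r).sup (w a) : ℕ) : ℚ)) := by
    intro a ha
    set k := agrOrd r (g a - R.comp (X + C a)) with hk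
    by_cases h : k < r
    · rw [if_pos h]
      refine le_trans ?_ (le_max_left _ _)
      have hwa := hw a ha k h
      have : ((n : ℚ) / 2) * (((s : ℚ) - (k : ℚ)) - ((d : ℚ) - (ℓ : ℚ)) / (n : ℚ))
          = (n : ℚ) * ((s : ℚ) - (k : ℚ)) / 2 - ((d : ℚ) - (ℓ : ℚ)) / 2 := by
        field_simp
      rw [this] at hwa
      linarith
    · rw [if_neg h]
      have hkr : k = r := le_antisymm (agr_le r _) (not_lt.mp h)
      have h0 : (0:ℚ) ≤ (((Finset.range r).sup (w a) : ℕ) : ℚ) := Nat.cast_nonneg _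
      rw [hkr]
      nlinarith [hdlQ]
  -- combine
  unfold Gamma
  have hge := Finset.sum_le_sum hterm
  refine le_trans ?_ hge
  rw [Finset.sum_add_distrib, Finset.sum_const, hT, ← Finset.sum_mul]
  have hcast : (∑ a ∈ T, (agrOrd r (g a - R.comp (X + C a)) : ℚ))
      = ((∑ a ∈ T, agrOrd r (g a - R.comp (X + C a)) : ℕ) : ℚ) := by
    push_cast; ring
  rw [hcast]
  have hSℓ : ((∑ a ∈ T, agrOrd r (g a - R.comp (X + C a)) : ℕ) : ℚ) ≤ (ℓ : ℚ) := by
    exact_mod_cast hsum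
  have hℓQ : (ℓ : ℚ) ≤ (d : ℚ) := by exact_mod_cast hℓd
  have key : ((n : ℚ) ^ 2 / 2) * ((s : ℚ) - (d : ℚ) / (n : ℚ))
      = ((n:ℚ) * (s:ℚ) * (n:ℚ) - (d:ℚ)*(n:ℚ)) / 2 := by
    field_simp
  rw [key]
  rw [nsmul_eq_mul]
  have hmul : (n : ℚ) * ((∑ a ∈ T, agrOrd r (g a - R.comp (X + C a)) : ℕ) : ℚ) ≤ (n : ℚ) * (ℓ : ℚ) :=
    mul_le_mul_of_nonneg_left hSℓ hnQ.le
  linarith
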